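/- Asymptotic purity formula via the cycle lemma: for d_A = d_B = d, the sum (1/(α!·D))·Σ_{σ∈S_α} d^{ξ(στ)+ξ(σ)} with D = binom(d² + α − 1, α) equals Cat_α · d^{1−α} + O(d^{−(α+1)}) as d → ∞ for fixed α. -/

import Mathlib

/-- Number of disjoint cycles of a permutation, counting fixed points. -/
def cycleCount {n : ℕ} (σ : Equiv.Perm (Fin n)) : ℕ :=
  σ.cycleType.card + (n - σ.support.card)

open Equiv Equiv.Perm Finset

variable {N : ℕ}

/-- the cycle (class) of `x` under `σ`, as a finset. -/
def cls (σ : Perm (Fin N)) (x : Fin N) : Finset (Fin N) :=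
  univ.filter (fun y => σ.SameCycle x y)

/-- minimal representatives of cycles. -/
def mins (σ : Perm (Fin N)) : Finset (Fin N) :=
  univ.filter (fun x => ∀ y, σ.SameCycle x y → x ≤ y)

lemma mem_cls {σ : Perm (Fin N)} {x y : Fin N} : y ∈ cls σ x ↔ σ.SameCycle x y := by
  simp [cls]

lemma mem_mins {σ : Perm (Fin N)} {x : Fin N} :
    x ∈ mins σ ↔ ∀ y, σ.SameCycle x y → x ≤ y := by simp [mins]

lemma self_mem_cls {σ : Perm (Fin N)} {x : Fin N} : x ∈ cls σ x :=
  mem_cls.2 (SameCycle.refl _ _)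

lemma cls_eq_of_sameCycle {σ : Perm (Fin N)} {x y : Fin N} (h : σ.SameCycle x y) :
    cls σ x = cls σ y := by
  ext z; simp only [mem_cls]
  exact ⟨fun hz => h.symm.trans hz, fun hz => h.trans hz⟩

lemma sameCycle_of_fixed {σ : Perm (Fin N)} {x y : Fin N} (hx : σ x = x)
    (h : σ.SameCycle x y) : y = x := by
  obtain ⟨i, hi⟩ := h
  rw [← hi]
  exact (σ.zpow_apply_eq_self_of_apply_eq_self hx i)

lemma cls_of_fixed {σ : Perm (Fin N)} {x : Fin N} (hx : σ x = x) : cls σ x = {x} := by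
  ext z
  simp only [mem_cls, Finset.mem_singleton]
  exact ⟨fun h => sameCycle_of_fixed hx h, fun h => h ▸ SameCycle.refl _ _⟩

/-- Bridge: `cycleCount` agrees with the number of minimal cycle representatives. -/
lemma cycleCount_eq_card_mins (σ : Perm (Fin N)) :
    σ.cycleType.card + (N - σ.support.card) = (mins σ).card := by
  classical
  have hsplit := Finset.card_filter_add_card_filter_not
    (s := mins σ) (p := fun x => x ∈ σ.support)
  -- fixed points part
  have hfix : (mins σ).filter (fun x => x ∉ σ.support) = σ.supportᶜ := by
    ext x
    simp only [Finset.mem_filter, Finset.mem_compl, mem_mins, mem_support, not_not]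
    constructor
    · rintro ⟨_, h⟩; exact h
    · intro hx
      refine ⟨fun y hy => ?_, hx⟩
      rw [sameCycle_of_fixed hx hy]
  have hfixcard : ((mins σ).filter (fun x => x ∉ σ.support)).card = N - σ.support.card := by
    rw [hfix, Finset.card_compl, Fintype.card_fin]
  -- support part: biject minimal reps in support with cycle factors
  have hsup : ((mins σ).filter (fun x => x ∈ σ.support)).card = σ.cycleFactorsFinset.card := by
    apply Finset.card_bij (fun x _ => σ.cycleOf x)
    · rintro x hx
      simp only [Finset.mem_filter] at hx
      exact cycleOf_mem_cycleFactorsFinset_iff.2 hx.2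
    · rintro x hx y hy h
      simp only [Finset.mem_filter, mem_mins] at hx hy
      have hxy : σ.SameCycle x y := by
        have : y ∈ (σ.cycleOf y).support := mem_support_cycleOf_iff.2 ⟨SameCycle.refl _ _, hy.2⟩
        rw [← h] at this
        exact (mem_support_cycleOf_iff.1 this).1
      exact le_antisymm (hx.1 y hxy) (hy.1 x hxy.symm)
    · intro c hc
      obtain ⟨x, hx, rfl⟩ : ∃ x ∈ σ.support, σ.cycleOf x = c := by
        obtain ⟨x, hx⟩ := (mem_cycleFactorsFinset_iff.1 hc).1.nonempty_support
        exact ⟨x, mem_cycleFactorsFinset_support_le hc hx, (cycle_is_cycleOf hx hc).symm⟩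
      -- take the minimum of the class of x
      have hne : (cls σ x).Nonempty := ⟨x, self_mem_cls⟩
      refine ⟨(cls σ x).min' hne, ?_, ?_⟩
      · have hmem : σ.SameCycle x ((cls σ x).min' hne) := mem_cls.1 ((cls σ x).min'_mem hne)
        simp only [Finset.mem_filter, mem_mins]
        constructor
        · exact fun y hy => (cls σ x).min'_le y (mem_cls.2 (hmem.trans hy))
        · -- min is in support
          rw [mem_support]
          intro hfixed
          have hxm := sameCycle_of_fixed hfixed hmem.symm
          exact (mem_support.1 hx) (hxm ▸ hfixed)
      · have hmem : σ.SameCycle x ((cls σ x).min' hne) := mem_cls.1 ((cls σ x).min'_mem hne)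
        exact (SameCycle.cycleOf_eq hmem).symm
  rw [← hsplit, hsup, hfixcard, cycleType_def, Multiset.card_map]
  rfl

def per (σ : Perm (Fin N)) (x : Fin N) : ℕ := (cls σ x).card

lemma exists_pos_pow_fix (σ : Perm (Fin N)) (x : Fin N) : ∃ i, 0 < i ∧ (σ ^ i) x = x :=
  ⟨orderOf σ, orderOf_pos σ, by rw [pow_orderOf_eq_one]; rfl⟩

lemma per_props (σ : Perm (Fin N)) (x : Fin N) :
    0 < per σ x ∧ (σ ^ per σ x) x = x ∧
      (∀ i j, i < per σ x → j < per σ x → (σ ^ i) x = (σ ^ j) x → i = j) ∧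
      cls σ x = (range (per σ x)).image (fun i => (σ ^ i) x) := by
  classical
  obtain h := exists_pos_pow_fix σ x
  set p := Nat.find h with hpdef
  obtain ⟨hppos, hpfix⟩ := Nat.find_spec h
  -- reduction mod p
  have hred : ∀ q r : ℕ, (σ ^ (p * q + r)) x = (σ ^ r) x := by
    intro q
    induction q with
    | zero => simp
    | succ q ih =>
      intro r
      have : p * (q + 1) + r = (p * q + r) + p := by ring
      rw [this, pow_add, Perm.mul_apply, hpfix]
      exact ih r
  have hmod : ∀ i : ℕ, (σ ^ i) x = (σ ^ (i % p)) x := by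
    intro i
    conv_lhs => rw [← Nat.div_add_mod i p]
    exact hred (i / p) (i % p)
  -- injectivity on range p
  have hinj : ∀ i j, i < p → j < p → (σ ^ i) x = (σ ^ j) x → i = j := by
    have key : ∀ i j, i < j → j < p → (σ ^ i) x ≠ (σ ^ j) x := by
      intro i j hij hjp heq
      have h1 : (σ ^ (j - i)) ((σ ^ i) x) = (σ ^ i) x := by
        rw [← Perm.mul_apply, ← pow_add, Nat.sub_add_cancel hij.le, heq]
      have h2 : (σ ^ (j - i)) x = x := by
        have hcomm : σ ^ (j - i) * (σ ^ i)⁻¹ = (σ ^ i)⁻¹ * σ ^ (j - i) :=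
          ((Commute.refl σ).pow_pow _ _).inv_left.symm.eq
        calc (σ ^ (j - i)) x = (σ ^ (j - i)) ((σ ^ i)⁻¹ ((σ ^ i) x)) := by
              rw [Perm.inv_def, Equiv.symm_apply_apply]
          _ = (σ ^ i)⁻¹ ((σ ^ (j - i)) ((σ ^ i) x)) := by
              simp only [← Perm.mul_apply, ← mul_assoc, hcomm]
          _ = x := by rw [h1, Perm.inv_def, Equiv.symm_apply_apply]
      exact Nat.find_min h (m := j - i) (lt_of_le_of_lt (Nat.sub_le _ _) hjp)
        ⟨Nat.sub_pos_of_lt hij, h2⟩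
    intro i j hi hj heq
    rcases lt_trichotomy i j with h' | h' | h'
    · exact absurd heq (key i j h' hj)
    · exact h'
    · exact absurd heq.symm (key j i h' hi)
  -- cls = image
  have hcls : cls σ x = (range p).image (fun i => (σ ^ i) x) := by
    ext y
    simp only [mem_cls, Finset.mem_image, Finset.mem_range]
    constructor
    · intro hy
      obtain ⟨i, _, hi⟩ := hy.exists_pow_eq'
      exact ⟨i % p, Nat.mod_lt _ hppos, by rw [← hmod]; exact hi⟩
    · rintro ⟨i, _, rfl⟩
      exact ⟨(i : ℤ), by simp [zpow_natCast]⟩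
  have hcard : per σ x = p := by
    rw [per, hcls, Finset.card_image_of_injOn, Finset.card_range]
    intro i hi j hj
    exact hinj i j (Finset.mem_range.1 hi) (Finset.mem_range.1 hj)
  rw [hcard]
  exact ⟨hppos, hpfix, hinj, hcls⟩

lemma per_pos (σ : Perm (Fin N)) (x : Fin N) : 0 < per σ x := (per_props σ x).1

lemma pow_per_apply (σ : Perm (Fin N)) (x : Fin N) : (σ ^ per σ x) x = x :=
  (per_props σ x).2.1

lemma pow_inj_per {σ : Perm (Fin N)} {x : Fin N} {i j : ℕ} (hi : i < per σ x)
    (hj : j < per σ x) (h : (σ ^ i) x = (σ ^ j) x) : i = j :=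
  (per_props σ x).2.2.1 i j hi hj h

lemma mem_cls_iff_pow {σ : Perm (Fin N)} {x y : Fin N} :
    y ∈ cls σ x ↔ ∃ i < per σ x, (σ ^ i) x = y := by
  rw [(per_props σ x).2.2.2]
  simp only [Finset.mem_image, Finset.mem_range]

section swaplemmas

variable {σ : Perm (Fin N)} {a b : Fin N}

/-- (m2): if `a`,`b` are in different cycles, then `swap a b * σ` joins them. -/
lemma sameCycle_swap_mul (hn : ¬σ.SameCycle a b) :
    (swap a b * σ).SameCycle a b := by
  classical
  by_cases hab : a = b
  · exact hab ▸ SameCycle.refl _ _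
  have hex : ∃ i, 0 < i ∧ (σ ^ i) a = a :=
    ⟨orderOf σ, orderOf_pos σ, by rw [pow_orderOf_eq_one]; rfl⟩
  obtain ⟨k, hkpos, hkfix, hmin⟩ :
      ∃ k, 0 < k ∧ (σ ^ k) a = a ∧ ∀ i, 0 < i → i < k → (σ ^ i) a ≠ a :=
    ⟨Nat.find hex, (Nat.find_spec hex).1, (Nat.find_spec hex).2,
      fun i hi0 hik hib => Nat.find_min hex hik ⟨hi0, hib⟩⟩
  have key : ∀ i, i < k → ((swap a b * σ) ^ i) a = (σ ^ i) a := by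
    intro i hi
    induction i with
    | zero => simp
    | succ i ih =>
      rw [pow_succ', Perm.mul_apply, ih (by omega), Perm.mul_apply,
        ← Perm.mul_apply σ, ← pow_succ']
      have hne_a : (σ ^ (i + 1)) a ≠ a := hmin _ (Nat.succ_pos i) hi
      have hne_b : (σ ^ (i + 1)) a ≠ b := fun hfix => hn ⟨((i + 1 : ℕ) : ℤ), by
        rw [zpow_natCast]; exact hfix⟩
      exact swap_apply_of_ne_of_ne hne_a hne_b
  have final : ((swap a b * σ) ^ k) a = b := by
    obtain ⟨k', rfl⟩ : ∃ k', k = k' + 1 := ⟨k - 1, (Nat.succ_pred_eq_of_pos hkpos).symm⟩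
    rw [pow_succ', Perm.mul_apply, key k' (Nat.lt_succ_self k'), Perm.mul_apply,
      ← Perm.mul_apply σ, ← pow_succ', hkfix, swap_apply_left]
  exact ⟨(k : ℤ), by rw [zpow_natCast]; exact final⟩

/-- (m1): merging only grows cycles. -/
lemma sameCycle_swap_mul_of_not (hn : ¬σ.SameCycle a b) {x y : Fin N}
    (h : σ.SameCycle x y) : (swap a b * σ).SameCycle x y := by
  classical
  have key : ∀ m : ℕ, (swap a b * σ).SameCycle x ((σ ^ m) x) := by
    intro m
    induction m with
    | zero => simpa using SameCycle.refl (swap a b * σ) x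
    | succ m ih =>
      set z := (σ ^ m) x with hzdef
      have hstep : (swap a b * σ).SameCycle z ((swap a b * σ) z) := ⟨1, by simp⟩
      have hc := sameCycle_swap_mul hn
      have hy : (σ ^ (m + 1)) x = σ z := by rw [pow_succ', Perm.mul_apply]
      rw [hy]
      by_cases hza : σ z = a
      · have hb : (swap a b * σ) z = b := by rw [Perm.mul_apply, hza, swap_apply_left]
        rw [hza]
        rw [hb] at hstep
        exact (ih.trans hstep).trans hc.symm
      · by_cases hzb : σ z = b
        · have ha : (swap a b * σ) z = a := by rw [Perm.mul_apply, hzb, swap_apply_right]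
          rw [hzb]
          rw [ha] at hstep
          exact (ih.trans hstep).trans hc
        · have hgz : (swap a b * σ) z = σ z := by
            rw [Perm.mul_apply]; exact swap_apply_of_ne_of_ne hza hzb
          rw [hgz] at hstep
          exact ih.trans hstep
  obtain ⟨m, _, rfl⟩ := h.exists_pow_eq'
  exact key m

/-- (iii): characterization of cycles after a merge. -/
lemma sameCycle_swap_mul_iff (hn : ¬σ.SameCycle a b) {x y : Fin N} :
    (swap a b * σ).SameCycle x y ↔
      σ.SameCycle x y ∨ (σ.SameCycle x a ∧ σ.SameCycle b y) ∨
        (σ.SameCycle x b ∧ σ.SameCycle a y) := by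
  classical
  constructor
  · intro h
    have key : ∀ m : ℕ,
        σ.SameCycle x (((swap a b * σ) ^ m) x) ∨
          (σ.SameCycle x a ∧ σ.SameCycle b (((swap a b * σ) ^ m) x)) ∨
            (σ.SameCycle x b ∧ σ.SameCycle a (((swap a b * σ) ^ m) x)) := by
      intro m
      induction m with
      | zero => simpa using Or.inl (SameCycle.refl σ x)
      | succ m ih =>
        set z := ((swap a b * σ) ^ m) x with hz
        have hy : ((swap a b * σ) ^ (m + 1)) x = swap a b (σ z) := by
          rw [pow_succ', Perm.mul_apply, Perm.mul_apply]
        have hzz : σ.SameCycle z (σ z) := ⟨1, by simp⟩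
        rw [hy]
        by_cases hza : σ z = a
        · rw [hza, swap_apply_left]
          rcases ih with h1 | ⟨h2a, h2b⟩ | ⟨h3a, h3b⟩
          · exact Or.inr (Or.inl ⟨h1.trans (hza ▸ hzz), SameCycle.refl _ _⟩)
          · exact absurd ((h2b.trans (hza ▸ hzz)).symm) hn
          · exact Or.inl h3a
        · by_cases hzb : σ z = b
          · rw [hzb, swap_apply_right]
            rcases ih with h1 | ⟨h2a, h2b⟩ | ⟨h3a, h3b⟩
            · exact Or.inr (Or.inr ⟨h1.trans (hzb ▸ hzz), SameCycle.refl _ _⟩)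
            · exact Or.inl h2a
            · exact absurd (h3b.trans (hzb ▸ hzz)) hn
          · rw [swap_apply_of_ne_of_ne hza hzb]
            rcases ih with h1 | ⟨h2a, h2b⟩ | ⟨h3a, h3b⟩
            · exact Or.inl (h1.trans hzz)
            · exact Or.inr (Or.inl ⟨h2a, h2b.trans hzz⟩)
            · exact Or.inr (Or.inr ⟨h3a, h3b.trans hzz⟩)
    obtain ⟨m, _, rfl⟩ := h.exists_pow_eq'
    exact key m
  · rintro (h | ⟨h1, h2⟩ | ⟨h1, h2⟩)
    · exact sameCycle_swap_mul_of_not hn h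
    · exact ((sameCycle_swap_mul_of_not hn h1).trans (sameCycle_swap_mul hn)).trans
        (sameCycle_swap_mul_of_not hn h2)
    · exact ((sameCycle_swap_mul_of_not hn h1).trans (sameCycle_swap_mul hn).symm).trans
        (sameCycle_swap_mul_of_not hn h2)

/-- (ii): splitting a cycle separates `a` and `b`. -/
lemma not_sameCycle_swap_mul (h : σ.SameCycle a b) (hab : a ≠ b) :
    ¬(swap a b * σ).SameCycle a b := by
  classical
  have hex : ∃ i, 0 < i ∧ (σ ^ i) a = b := by
    obtain ⟨i, _, hi⟩ := h.exists_pow_eq'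
    rcases Nat.eq_zero_or_pos i with rfl | hpos
    · simp at hi; exact absurd hi hab
    · exact ⟨i, hpos, hi⟩
  obtain ⟨k, hkpos, hkb, hmin⟩ :
      ∃ k, 0 < k ∧ (σ ^ k) a = b ∧ ∀ i, 0 < i → i < k → (σ ^ i) a ≠ b :=
    ⟨Nat.find hex, (Nat.find_spec hex).1, (Nat.find_spec hex).2,
      fun i hi0 hik hib => Nat.find_min hex hik ⟨hi0, hib⟩⟩
  set S := (range k).image (fun i => (σ ^ i) a) with hS
  have haS : a ∈ S := by
    simp only [hS, Finset.mem_image, Finset.mem_range]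
    exact ⟨0, hkpos, by simp⟩
  have hbS : b ∉ S := by
    simp only [hS, Finset.mem_image, Finset.mem_range]
    rintro ⟨i, hik, hib⟩
    rcases Nat.eq_zero_or_pos i with rfl | hpos
    · simp at hib; exact hab hib
    · exact hmin i hpos hik hib
  have hclosed : ∀ s ∈ S, (swap a b * σ) s ∈ S := by
    intro s hs
    simp only [hS, Finset.mem_image, Finset.mem_range] at hs
    obtain ⟨i, hik, rfl⟩ := hs
    rw [Perm.mul_apply, ← Perm.mul_apply σ, ← pow_succ']
    by_cases hib : (σ ^ (i + 1)) a = b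
    · rw [hib, swap_apply_right]; exact haS
    · have hia : (σ ^ (i + 1)) a ≠ a := by
        intro hfix
        have hne : i + 1 ≠ k := fun hkk => hib (hkk ▸ hkb)
        have hlt : i + 1 < k := lt_of_le_of_ne hik hne
        have hsb : (σ ^ (k - (i + 1))) a = b := by
          have h2 := hkb
          rw [← Nat.sub_add_cancel hlt.le, pow_add, Perm.mul_apply, hfix] at h2
          exact h2
        exact hmin _ (by omega) (by omega) hsb
      rw [swap_apply_of_ne_of_ne hia hib]
      simp only [hS, Finset.mem_image, Finset.mem_range]
      have hne : i + 1 ≠ k := fun hkk => hib (hkk ▸ hkb)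
      exact ⟨i + 1, by omega, rfl⟩
  intro hcon
  obtain ⟨m, _, hm⟩ := hcon.exists_pow_eq'
  have hall : ∀ j : ℕ, ((swap a b * σ) ^ j) a ∈ S := by
    intro j
    induction j with
    | zero => simpa using haS
    | succ j ih => rw [pow_succ', Perm.mul_apply]; exact hclosed _ ih
  exact hbS (hm ▸ hall m)

/-- (s1): explicit description of the cycle of `a` after a split. -/
lemma cls_swap_mul_of_split {k : ℕ} (hkpos : 0 < k) (hkb : (σ ^ k) a = b)
    (hmin : ∀ i, 0 < i → i < k → (σ ^ i) a ≠ b) (hab : a ≠ b) :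
    cls (swap a b * σ) a = (range k).image (fun i => (σ ^ i) a) := by
  classical
  have hia' : ∀ i, i + 1 < k → (σ ^ (i + 1)) a ≠ a := by
    intro i hlt hfix
    have hsb : (σ ^ (k - (i + 1))) a = b := by
      have h2 := hkb
      rw [← Nat.sub_add_cancel hlt.le, pow_add, Perm.mul_apply, hfix] at h2
      exact h2
    exact hmin _ (by omega) (by omega) hsb
  have hkey : ∀ i, i < k → ((swap a b * σ) ^ i) a = (σ ^ i) a := by
    intro i hi
    induction i with
    | zero => simp
    | succ i ih =>
      rw [pow_succ', Perm.mul_apply, ih (by omega), Perm.mul_apply, ← Perm.mul_apply σ,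
        ← pow_succ']
      exact swap_apply_of_ne_of_ne (hia' i hi) (hmin _ (Nat.succ_pos i) hi)
  ext y
  simp only [mem_cls, Finset.mem_image, Finset.mem_range]
  constructor
  · intro hy
    obtain ⟨m, _, rfl⟩ := hy.exists_pow_eq'
    have hclosed : ∀ i, i < k → (swap a b * σ) ((σ ^ i) a) ∈
        (range k).image (fun i => (σ ^ i) a) := by
      intro i hik
      rw [Perm.mul_apply, ← Perm.mul_apply σ, ← pow_succ']
      by_cases hib : i + 1 = k
      · rw [hib, hkb, swap_apply_right]
        exact Finset.mem_image.2 ⟨0, Finset.mem_range.2 hkpos, by simp⟩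
      · have hlt : i + 1 < k := by omega
        rw [swap_apply_of_ne_of_ne (hia' i hlt) (hmin _ (Nat.succ_pos i) hlt)]
        exact Finset.mem_image.2 ⟨i + 1, Finset.mem_range.2 hlt, rfl⟩
    have hall : ∀ j : ℕ, ((swap a b * σ) ^ j) a ∈ (range k).image (fun i => (σ ^ i) a) := by
      intro j
      induction j with
      | zero => exact Finset.mem_image.2 ⟨0, Finset.mem_range.2 hkpos, by simp⟩
      | succ j ih =>
        rw [pow_succ', Perm.mul_apply]
        obtain ⟨i, hik, hieq⟩ := Finset.mem_image.1 ih
        rw [← hieq]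
        exact hclosed i (Finset.mem_range.1 hik)
    obtain ⟨i, hik, hieq⟩ := Finset.mem_image.1 (hall m)
    exact ⟨i, Finset.mem_range.1 hik, hieq⟩
  · rintro ⟨i, hik, rfl⟩
    exact ⟨(i : ℤ), by rw [zpow_natCast, hkey i hik]⟩

end swaplemmas

section minscount

variable {σ : Perm (Fin N)} {a b : Fin N}

lemma cls_nonempty (σ : Perm (Fin N)) (x : Fin N) : (cls σ x).Nonempty := ⟨x, self_mem_cls⟩

/-- partition of a cycle after a split. -/
lemma cls_split_union (h : σ.SameCycle a b) (hab : a ≠ b) :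
    cls σ a = cls (swap a b * σ) a ∪ cls (swap a b * σ) b := by
  have hn : ¬(swap a b * σ).SameCycle a b := not_sameCycle_swap_mul h hab
  have hrw : swap a b * (swap a b * σ) = σ := by
    rw [← mul_assoc, swap_mul_self, one_mul]
  ext z
  have hiff := sameCycle_swap_mul_iff (σ := swap a b * σ) hn (x := a) (y := z)
  rw [hrw] at hiff
  simp only [mem_cls, Finset.mem_union]
  rw [hiff]
  constructor
  · rintro (h1 | ⟨h2a, h2b⟩ | ⟨h3a, h3b⟩)
    · exact Or.inl h1
    · exact Or.inr h2b
    · exact absurd h3a hn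
  · rintro (h1 | h2)
    · exact Or.inl h1
    · exact Or.inr (Or.inl ⟨SameCycle.refl _ _, h2⟩)

lemma cls_split_disjoint (h : σ.SameCycle a b) (hab : a ≠ b) :
    Disjoint (cls (swap a b * σ) a) (cls (swap a b * σ) b) := by
  have hn : ¬(swap a b * σ).SameCycle a b := not_sameCycle_swap_mul h hab
  rw [Finset.disjoint_left]
  intro z hza hzb
  exact hn ((mem_cls.1 hza).trans (mem_cls.1 hzb).symm)

lemma mins_swap_mul_merge_aux (hab : a ≠ b) (hn : ¬σ.SameCycle a b)
    (hlt : (cls σ a).min' (cls_nonempty σ a) < (cls σ b).min' (cls_nonempty σ b)) :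
    mins (swap a b * σ) = (mins σ).erase ((cls σ b).min' (cls_nonempty σ b)) := by
  set mA := (cls σ a).min' (cls_nonempty σ a) with hmAdef
  set mB := (cls σ b).min' (cls_nonempty σ b) with hmBdef
  have hmA : σ.SameCycle a mA := mem_cls.1 ((cls σ a).min'_mem (cls_nonempty σ a))
  have hmB : σ.SameCycle b mB := mem_cls.1 ((cls σ b).min'_mem (cls_nonempty σ b))
  ext x
  rw [Finset.mem_erase]
  constructor
  · intro hx
    have hx' := mem_mins.1 hx
    have hxmins : x ∈ mins σ :=
      mem_mins.2 fun y hy => hx' y (sameCycle_swap_mul_of_not hn hy)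
    refine ⟨?_, hxmins⟩
    rintro rfl
    -- x = mB, but mB is same (swap)cycle as mA which is smaller
    have hchain : (swap a b * σ).SameCycle mB mA :=
      ((sameCycle_swap_mul_of_not hn hmB.symm).trans
        (sameCycle_swap_mul hn).symm).trans (sameCycle_swap_mul_of_not hn hmA)
    exact absurd (hx' mA hchain) (not_le.2 hlt)
  · rintro ⟨hne, hx⟩
    have hx' := mem_mins.1 hx
    refine mem_mins.2 fun y hy => ?_
    rcases (sameCycle_swap_mul_iff hn).1 hy with h1 | ⟨h2a, h2b⟩ | ⟨h3a, h3b⟩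
    · exact hx' y h1
    · -- x ~ a, so x = mA; and y ~ b so mB ≤ y
      have hxA : x = mA := le_antisymm (hx' mA (h2a.trans hmA))
        ((cls σ a).min'_le x (mem_cls.2 h2a.symm))
      have hyB : mB ≤ y := (cls σ b).min'_le y (mem_cls.2 h2b)
      calc x = mA := hxA
        _ ≤ y := le_trans hlt.le hyB
    · -- x ~ b, so x = mB, contradiction
      have hxB : x = mB := le_antisymm (hx' mB (h3a.trans hmB))
        ((cls σ b).min'_le x (mem_cls.2 h3a.symm))
      exact absurd hxB hne

lemma card_mins_swap_mul_of_not (hab : a ≠ b) (hn : ¬σ.SameCycle a b) :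
    (mins (swap a b * σ)).card + 1 = (mins σ).card := by
  set mA := (cls σ a).min' (cls_nonempty σ a) with hmAdef
  set mB := (cls σ b).min' (cls_nonempty σ b) with hmBdef
  have hmA : σ.SameCycle a mA := mem_cls.1 ((cls σ a).min'_mem (cls_nonempty σ a))
  have hmB : σ.SameCycle b mB := mem_cls.1 ((cls σ b).min'_mem (cls_nonempty σ b))
  have hminmem : ∀ c : Fin N, ((cls σ c).min' (cls_nonempty σ c)) ∈ mins σ := by
    intro c
    refine mem_mins.2 fun y hy => ?_
    refine (cls σ c).min'_le y (mem_cls.2 ?_)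
    exact (mem_cls.1 ((cls σ c).min'_mem (cls_nonempty σ c))).trans hy
  have hcard : ∀ m ∈ mins σ, (mins (swap a b * σ)) = (mins σ).erase m →
      (mins (swap a b * σ)).card + 1 = (mins σ).card := by
    intro m hm heq
    rw [heq, Finset.card_erase_of_mem hm]
    have : 0 < (mins σ).card := Finset.card_pos.2 ⟨m, hm⟩
    omega
  rcases lt_trichotomy mA mB with hlt | heq | hgt
  · exact hcard mB (hminmem b) (mins_swap_mul_merge_aux hab hn hlt)
  · exfalso
    exact hn (hmA.trans (heq ▸ hmB.symm : σ.SameCycle mA b))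
  · have hswap : swap a b = swap b a := swap_comm a b
    have hn' : ¬σ.SameCycle b a := fun hc => hn hc.symm
    have := mins_swap_mul_merge_aux (Ne.symm hab) hn' hgt
    rw [← hswap] at this
    exact hcard mA (hminmem a) this

lemma card_mins_swap_mul_of_sameCycle (hab : a ≠ b) (h : σ.SameCycle a b) :
    (mins (swap a b * σ)).card = (mins σ).card + 1 := by
  have hn : ¬(swap a b * σ).SameCycle a b := not_sameCycle_swap_mul h hab
  have hkey := card_mins_swap_mul_of_not hab hn
  rw [← mul_assoc, swap_mul_self, one_mul] at hkey
  omega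

end minscount

section finstuff

variable {n : ℕ}

/-- extend a permutation of `Fin (n+1)` to `Fin (n+2)`, fixing `0`, via `succ`. -/
def emb (π : Perm (Fin (n + 1))) : Perm (Fin (n + 2)) := Equiv.Perm.decomposeFin.symm (0, π)

@[simp] lemma emb_zero (π : Perm (Fin (n + 1))) : emb π 0 = 0 :=
  Equiv.Perm.decomposeFin_symm_apply_zero _ _

@[simp] lemma emb_succ (π : Perm (Fin (n + 1))) (x : Fin (n + 1)) :
    emb π x.succ = (π x).succ := by
  rw [emb, Equiv.Perm.decomposeFin_symm_apply_succ]
  simp [Equiv.swap_self]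

lemma emb_pow_zero (π : Perm (Fin (n + 1))) (m : ℕ) : ((emb π) ^ m) 0 = 0 := by
  induction m with
  | zero => simp
  | succ m ih => rw [pow_succ', Perm.mul_apply, ih, emb_zero]

lemma emb_pow_succ (π : Perm (Fin (n + 1))) (m : ℕ) (x : Fin (n + 1)) :
    ((emb π) ^ m) x.succ = ((π ^ m) x).succ := by
  induction m with
  | zero => simp
  | succ m ih => rw [pow_succ', pow_succ', Perm.mul_apply, Perm.mul_apply, ih, emb_succ]

lemma sameCycle_emb_zero {π : Perm (Fin (n + 1))} {z : Fin (n + 2)} :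
    (emb π).SameCycle 0 z ↔ z = 0 := by
  constructor
  · intro h
    obtain ⟨m, _, rfl⟩ := h.exists_pow_eq'
    exact emb_pow_zero π m
  · rintro rfl; exact SameCycle.refl _ _

lemma sameCycle_emb_succ {π : Perm (Fin (n + 1))} {x y : Fin (n + 1)} :
    (emb π).SameCycle x.succ y.succ ↔ π.SameCycle x y := by
  constructor
  · intro h
    obtain ⟨m, _, hm⟩ := h.exists_pow_eq'
    rw [emb_pow_succ] at hm
    exact ⟨(m : ℤ), by rw [zpow_natCast]; exact Fin.succ_injective _ hm⟩
  · intro h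
    obtain ⟨m, _, hm⟩ := h.exists_pow_eq'
    exact ⟨(m : ℤ), by rw [zpow_natCast, emb_pow_succ, hm]⟩

lemma sameCycle_emb_succ_zero {π : Perm (Fin (n + 1))} {x : Fin (n + 1)} :
    ¬(emb π).SameCycle x.succ 0 := fun h => Fin.succ_ne_zero x (sameCycle_emb_zero.1 h.symm)

/-- `mins` of an extension. -/
lemma mins_emb (π : Perm (Fin (n + 1))) :
    mins (emb π) = insert 0 ((mins π).image Fin.succ) := by
  ext z
  induction z using Fin.cases with
  | zero =>
    simp only [Finset.mem_insert, eq_self_iff_true, true_or, iff_true]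
    exact mem_mins.2 fun y _ => Fin.zero_le y
  | succ x =>
    simp only [Finset.mem_insert, Finset.mem_image]
    constructor
    · intro h
      refine Or.inr ⟨x, mem_mins.2 fun y hy => ?_, rfl⟩
      have := mem_mins.1 h y.succ (sameCycle_emb_succ.2 hy)
      exact Fin.succ_le_succ_iff.1 this
    · rintro (h | ⟨x', hx', heq⟩)
      · exact absurd h (Fin.succ_ne_zero x)
      · have hx : x' = x := Fin.succ_injective _ heq
        subst hx
        refine mem_mins.2 fun y hy => ?_
        induction y using Fin.cases with
        | zero => exact absurd hy sameCycle_emb_succ_zero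
        | succ y' =>
          exact Fin.succ_le_succ_iff.2 (mem_mins.1 hx' y' (sameCycle_emb_succ.1 hy))

lemma card_mins_emb (π : Perm (Fin (n + 1))) :
    (mins (emb π)).card = (mins π).card + 1 := by
  rw [mins_emb, Finset.card_insert_of_notMem, Finset.card_image_of_injective _
    (Fin.succ_injective _)]
  simp only [Finset.mem_image]
  rintro ⟨x, _, hx⟩
  exact Fin.succ_ne_zero x hx

/-- the key splice identity. -/
lemma emb_mul_finRotate (π : Perm (Fin (n + 1))) :
    emb π * finRotate (n + 2) =
      swap 0 ((π 0).succ) * emb (π * finRotate (n + 1)) := by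
  ext x
  rw [Perm.mul_apply, Perm.mul_apply, finRotate_succ_apply]
  induction x using Fin.cases with
  | zero =>
    rw [show (0 : Fin (n + 2)) + 1 = Fin.succ 0 from (Fin.succ_zero_eq_one).symm, emb_succ,
      emb_zero, swap_apply_left]
  | succ x₀ =>
    induction x₀ using Fin.lastCases with
    | last =>
      rw [Fin.succ_last, show Fin.last (n + 1) + 1 = 0 from Fin.last_add_one _, emb_zero,
        ← Fin.succ_last, emb_succ]
      have : (π * finRotate (n + 1)) (Fin.last n) = π 0 := by
        rw [Perm.mul_apply, finRotate_succ_apply, Fin.last_add_one]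
      rw [this, swap_apply_right]
    | cast y =>
      have hρ : (π * finRotate (n + 1)) (Fin.castSucc y) = π y.succ := by
        rw [Perm.mul_apply, finRotate_succ_apply, Fin.coeSucc_eq_succ]
      have h2 : (π y.succ).succ ≠ (π 0).succ := by
        intro hcon
        exact Fin.succ_ne_zero y (π.injective (Fin.succ_injective _ hcon))
      rw [show (Fin.castSucc y).succ + 1 = (y.succ).succ by
          rw [Fin.succ_castSucc, Fin.coeSucc_eq_succ], emb_succ, emb_succ, hρ,
        swap_apply_of_ne_of_ne (Fin.succ_ne_zero _) h2]

end finstuff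

section level

variable {n : ℕ}

/-- number of cycles (orbit count). -/
def mct {N : ℕ} (σ : Perm (Fin N)) : ℕ := (mins σ).card

/-- size of the cycle of the rotated product through the last point. -/
def CkP {m : ℕ} (σ : Perm (Fin (m + 1))) : ℕ := per (σ * finRotate (m + 1)) (Fin.last m)

/-- the "good" (genus zero) condition. -/
def Good {m : ℕ} (σ : Perm (Fin (m + 1))) : Prop :=
  mct (σ * finRotate (m + 1)) + mct σ = m + 2

def rho (π : Perm (Fin (n + 1))) : Perm (Fin (n + 1)) := π * finRotate (n + 1)

def rhat (π : Perm (Fin (n + 1))) : Perm (Fin (n + 2)) := emb π * finRotate (n + 2)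

lemma rhat_eq (π : Perm (Fin (n + 1))) : rhat π = swap 0 ((π 0).succ) * emb (rho π) :=
  emb_mul_finRotate π

lemma not_sc_emb_zero {π : Perm (Fin (n + 1))} {j : Fin (n + 2)} (hj : j ≠ 0) :
    ¬(emb π).SameCycle 0 j := fun h => hj (sameCycle_emb_zero.1 h)

lemma mct_rhat (π : Perm (Fin (n + 1))) : mct (rhat π) = mct (rho π) := by
  have h := card_mins_swap_mul_of_not (σ := emb (rho π)) (a := 0) (b := (π 0).succ)
    (Ne.symm (Fin.succ_ne_zero _)) (not_sc_emb_zero (Fin.succ_ne_zero _))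
  rw [← rhat_eq, card_mins_emb] at h
  have : mct (rhat π) + 1 = mct (rho π) + 1 := h
  omega

lemma rho_last (π : Perm (Fin (n + 1))) : (rho π) (Fin.last n) = π 0 := by
  rw [rho, Perm.mul_apply, finRotate_succ_apply, Fin.last_add_one]

lemma sc_rho_last (π : Perm (Fin (n + 1))) : (rho π).SameCycle (Fin.last n) (π 0) :=
  ⟨1, by rw [zpow_one, rho_last]⟩

lemma sc_rhat_zero {π : Perm (Fin (n + 1))} {z : Fin (n + 2)} :
    (rhat π).SameCycle 0 z ↔
      z = 0 ∨ ∃ y, z = y.succ ∧ (rho π).SameCycle (Fin.last n) y := by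
  rw [rhat_eq, sameCycle_swap_mul_iff (not_sc_emb_zero (Fin.succ_ne_zero (π 0)))]
  constructor
  · rintro (h1 | ⟨h2a, h2b⟩ | ⟨h3a, h3b⟩)
    · exact Or.inl (sameCycle_emb_zero.1 h1)
    · induction z using Fin.cases with
      | zero => exact Or.inl rfl
      | succ y =>
        exact Or.inr ⟨y, rfl, (sc_rho_last π).trans (sameCycle_emb_succ.1 h2b)⟩
    · exact absurd h3a (not_sc_emb_zero (Fin.succ_ne_zero _))
  · rintro (rfl | ⟨y, rfl, hy⟩)
    · exact Or.inl (SameCycle.refl _ _)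
    · exact Or.inr (Or.inl ⟨SameCycle.refl _ _,
        sameCycle_emb_succ.2 ((sc_rho_last π).symm.trans hy)⟩)

lemma cls_rhat_zero (π : Perm (Fin (n + 1))) :
    cls (rhat π) 0 = insert 0 ((cls (rho π) (Fin.last n)).image Fin.succ) := by
  ext z
  simp only [mem_cls, Finset.mem_insert, Finset.mem_image, sc_rhat_zero]
  constructor
  · rintro (rfl | ⟨y, rfl, hy⟩)
    · exact Or.inl rfl
    · exact Or.inr ⟨y, hy, rfl⟩
  · rintro (rfl | ⟨y, hy, rfl⟩)
    · exact Or.inl rfl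
    · exact Or.inr ⟨y, rfl, hy⟩

lemma per_rhat_zero (π : Perm (Fin (n + 1))) : per (rhat π) 0 = CkP π + 1 := by
  rw [per, cls_rhat_zero, Finset.card_insert_of_notMem, Finset.card_image_of_injective _
    (Fin.succ_injective _)]
  · rfl
  · simp only [Finset.mem_image]
    rintro ⟨x, _, hx⟩
    exact Fin.succ_ne_zero x hx

lemma sc_rhat_zero_last (π : Perm (Fin (n + 1))) :
    (rhat π).SameCycle 0 (Fin.last (n + 1)) :=
  sc_rhat_zero.2 (Or.inr ⟨Fin.last n, (Fin.succ_last n).symm, SameCycle.refl _ _⟩)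

lemma rhat_last (π : Perm (Fin (n + 1))) : rhat π (Fin.last (n + 1)) = 0 := by
  rw [rhat_eq, ← Fin.succ_last, Perm.mul_apply, emb_succ, rho_last, swap_apply_right]

lemma rhat_pow_last (π : Perm (Fin (n + 1))) :
    ((rhat π) ^ (per (rhat π) 0 - 1)) 0 = Fin.last (n + 1) := by
  have h : (rhat π) (((rhat π) ^ (per (rhat π) 0 - 1)) 0) = (rhat π) (Fin.last (n + 1)) := by
    rw [rhat_last, ← Perm.mul_apply, ← pow_succ',
      Nat.sub_add_cancel (per_pos (rhat π) 0), pow_per_apply]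
  exact (rhat π).injective h

lemma mk_eq (π : Perm (Fin (n + 1))) (j : Fin (n + 2)) :
    Equiv.Perm.decomposeFin.symm (j, π) = swap 0 j * emb π := by
  ext x
  induction x using Fin.cases with
  | zero =>
    rw [Perm.mul_apply, Equiv.Perm.decomposeFin_symm_apply_zero, emb_zero, swap_apply_left]
  | succ x =>
    rw [Perm.mul_apply, Equiv.Perm.decomposeFin_symm_apply_succ, emb_succ]

lemma mk_zero_eq (π : Perm (Fin (n + 1))) :
    Equiv.Perm.decomposeFin.symm ((0 : Fin (n + 2)), π) = emb π := rfl

lemma mk_mul_rot (π : Perm (Fin (n + 1))) (j : Fin (n + 2)) :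
    Equiv.Perm.decomposeFin.symm (j, π) * finRotate (n + 2) = swap 0 j * rhat π := by
  rw [mk_eq, mul_assoc]; rfl

lemma mct_mk_zero (π : Perm (Fin (n + 1))) :
    mct (Equiv.Perm.decomposeFin.symm ((0 : Fin (n + 2)), π)) = mct π + 1 := by
  rw [mk_zero_eq]; exact card_mins_emb π

lemma mct_mk_ne (π : Perm (Fin (n + 1))) {j : Fin (n + 2)} (hj : j ≠ 0) :
    mct (Equiv.Perm.decomposeFin.symm (j, π)) = mct π := by
  rw [mk_eq]
  have h := card_mins_swap_mul_of_not (σ := emb π) (a := 0) (b := j)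
    (Ne.symm hj) (not_sc_emb_zero hj)
  rw [card_mins_emb] at h
  have : mct (swap 0 j * emb π) + 1 = mct π + 1 := h
  omega

lemma CkP_mk_zero (π : Perm (Fin (n + 1))) :
    CkP (Equiv.Perm.decomposeFin.symm ((0 : Fin (n + 2)), π)) = CkP π + 1 := by
  show per (Equiv.Perm.decomposeFin.symm ((0 : Fin (n + 2)), π) * finRotate (n + 2))
    (Fin.last (n + 1)) = CkP π + 1
  rw [mk_zero_eq]
  show per (rhat π) (Fin.last (n + 1)) = CkP π + 1
  rw [per, cls_eq_of_sameCycle (sc_rhat_zero_last π).symm, ← per, per_rhat_zero]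

end level
section level2

variable {n : ℕ}

lemma split_data (π : Perm (Fin (n + 1))) {i : ℕ} (hi0 : 0 < i) (hiP : i < per (rhat π) 0) :
    ((rhat π) ^ i) 0 ≠ 0 ∧
      mct (swap 0 (((rhat π) ^ i) 0) * rhat π) = mct (rho π) + 1 ∧
      per (swap 0 (((rhat π) ^ i) 0) * rhat π) (Fin.last (n + 1)) = per (rhat π) 0 - i := by
  set g := rhat π with hgdef
  set j := (g ^ i) 0 with hjdef
  have hj0 : j ≠ 0 := by
    intro h
    have h0 : (g ^ i) 0 = (g ^ 0) 0 := by rw [← hjdef, h, pow_zero, Perm.one_apply]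
    exact absurd (pow_inj_per hiP (per_pos g 0) h0) (by omega)
  have hsc : g.SameCycle 0 j := ⟨(i : ℤ), by rw [zpow_natCast, hjdef]⟩
  have hab : (0 : Fin (n + 2)) ≠ j := Ne.symm hj0
  have hmct : mct (swap 0 j * g) = mct (rho π) + 1 := by
    have h := card_mins_swap_mul_of_sameCycle hab hsc
    have h2 : mct (swap 0 j * g) = mct g + 1 := h
    rw [h2, hgdef, mct_rhat]
  have hmin : ∀ i', 0 < i' → i' < i → (g ^ i') 0 ≠ j := by
    intro i' hi'0 hi'i h
    exact absurd (pow_inj_per (lt_trans hi'i hiP) hiP (hjdef ▸ h)) (by omega)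
  have hclsa : cls (swap 0 j * g) 0 = (range i).image (fun m => (g ^ m) 0) :=
    cls_swap_mul_of_split hi0 hjdef.symm hmin hab
  have hcarda : (cls (swap 0 j * g) 0).card = i := by
    rw [hclsa, Finset.card_image_of_injOn, Finset.card_range]
    intro a ha b hb h
    exact pow_inj_per (lt_trans (Finset.mem_range.1 ha) hiP)
      (lt_trans (Finset.mem_range.1 hb) hiP) h
  have hunion : cls g 0 = cls (swap 0 j * g) 0 ∪ cls (swap 0 j * g) j :=
    cls_split_union hsc hab
  have hdisj := cls_split_disjoint hsc hab
  have hcardj : (cls (swap 0 j * g) j).card = per g 0 - i := by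
    have hcg : (cls g 0).card = per g 0 := rfl
    have := congrArg Finset.card hunion
    rw [Finset.card_union_of_disjoint hdisj, hcarda, hcg] at this
    omega
  have hmarked_mem : Fin.last (n + 1) ∈ cls g 0 := mem_cls.2 (sc_rhat_zero_last π)
  have hmarked_not : Fin.last (n + 1) ∉ cls (swap 0 j * g) 0 := by
    rw [hclsa]
    simp only [Finset.mem_image, Finset.mem_range]
    rintro ⟨i', hi', heq⟩
    have hP1 : (g ^ (per g 0 - 1)) 0 = Fin.last (n + 1) := rhat_pow_last π
    have : i' = per g 0 - 1 :=
      pow_inj_per (lt_trans hi' hiP) (by have := per_pos g 0; omega) (by rw [heq, hP1])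
    omega
  have hmarked_j : Fin.last (n + 1) ∈ cls (swap 0 j * g) j := by
    rw [hunion] at hmarked_mem
    rcases Finset.mem_union.1 hmarked_mem with h | h
    · exact absurd h hmarked_not
    · exact h
  have hper : per (swap 0 j * g) (Fin.last (n + 1)) = per g 0 - i := by
    rw [per, cls_eq_of_sameCycle (mem_cls.1 hmarked_j).symm, hcardj]
  exact ⟨hj0, hmct, hper⟩

lemma mct_fin_one (σ : Perm (Fin 1)) : mct σ = 1 := by
  have h : mins σ = univ := by
    ext x
    simp only [Finset.mem_univ, iff_true, mem_mins]
    intro y _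
    exact le_of_eq (Subsingleton.elim x y)
  rw [mct, h, Finset.card_univ, Fintype.card_fin]

lemma CkP_fin_one (σ : Perm (Fin 1)) : CkP σ = 1 := by
  refine le_antisymm ?_ (per_pos _ _)
  have h := Finset.card_le_univ (cls (σ * finRotate 1) (Fin.last 0))
  rw [Fintype.card_fin] at h
  exact h

lemma mk_zero_mul_rot (π : Perm (Fin (n + 1))) :
    Equiv.Perm.decomposeFin.symm ((0 : Fin (n + 2)), π) * finRotate (n + 2) = rhat π := by
  rw [mk_zero_eq]; rfl

lemma sum_bound : ∀ (m : ℕ) (σ : Perm (Fin (m + 1))),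
    ∃ c, mct (σ * finRotate (m + 1)) + mct σ + 2 * c = m + 2 := by
  intro m
  induction m with
  | zero =>
    intro σ
    exact ⟨0, by rw [mct_fin_one, mct_fin_one]⟩
  | succ m ih =>
    intro σ
    obtain ⟨⟨j, π⟩, hσ⟩ : ∃ p, Equiv.Perm.decomposeFin.symm p = σ :=
      ⟨Equiv.Perm.decomposeFin σ, Equiv.symm_apply_apply _ _⟩
    subst hσ
    obtain ⟨c, hc⟩ := ih π
    have hcρ : mct (rho π) + mct π + 2 * c = m + 2 := hc
    by_cases hj : j = 0
    · subst hj
      rw [mk_zero_mul_rot, mct_rhat, mct_mk_zero]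
      exact ⟨c, by omega⟩
    · rw [mk_mul_rot, mct_mk_ne π hj]
      by_cases hsc : (rhat π).SameCycle 0 j
      · have h := card_mins_swap_mul_of_sameCycle (Ne.symm hj) hsc
        have h2 : mct (swap 0 j * rhat π) = mct (rhat π) + 1 := h
        rw [h2, mct_rhat]
        exact ⟨c, by omega⟩
      · have h := card_mins_swap_mul_of_not (Ne.symm hj) hsc
        have h2 : mct (swap 0 j * rhat π) + 1 = mct (rhat π) := h
        rw [mct_rhat] at h2
        exact ⟨c + 1, by omega⟩

/-- The master characterization. -/
lemma good_ck_char (π : Perm (Fin (n + 1))) (j : Fin (n + 2)) (k : ℕ) :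
    (Good (Equiv.Perm.decomposeFin.symm (j, π)) ∧
        CkP (Equiv.Perm.decomposeFin.symm (j, π)) = k) ↔
      ((j = 0 ∧ Good π ∧ CkP π + 1 = k) ∨
        (Good π ∧ 1 ≤ k ∧ k ≤ CkP π ∧ j = ((rhat π) ^ (CkP π + 1 - k)) 0)) := by
  have hperP : per (rhat π) 0 = CkP π + 1 := per_rhat_zero π
  by_cases hj : j = 0
  · subst hj
    constructor
    · rintro ⟨hg, hk⟩
      have hG : mct (rhat π) + (mct π + 1) = n + 3 := by
        have h1 := mk_zero_mul_rot π
        have h2 := mct_mk_zero π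
        have : mct (Equiv.Perm.decomposeFin.symm ((0 : Fin (n + 2)), π) * finRotate (n + 2)) +
            mct (Equiv.Perm.decomposeFin.symm ((0 : Fin (n + 2)), π)) = n + 3 := hg
        rw [h1, h2] at this
        exact this
      rw [mct_rhat] at hG
      refine Or.inl ⟨rfl, ?_, ?_⟩
      · show mct (rho π) + mct π = n + 2
        omega
      · rw [← hk, CkP_mk_zero]
    · rintro (⟨_, hgπ, hkk⟩ | ⟨hgπ, hk1, hkle, hje⟩)
      · constructor
        · show mct (Equiv.Perm.decomposeFin.symm ((0 : Fin (n + 2)), π) * finRotate (n + 2)) +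
            mct (Equiv.Perm.decomposeFin.symm ((0 : Fin (n + 2)), π)) = n + 3
          rw [mk_zero_mul_rot, mct_rhat, mct_mk_zero]
          have : mct (rho π) + mct π = n + 2 := hgπ
          omega
        · rw [CkP_mk_zero, hkk]
      · exfalso
        have hi0 : 0 < CkP π + 1 - k := by omega
        have hiP : CkP π + 1 - k < per (rhat π) 0 := by omega
        have h0 : ((rhat π) ^ (CkP π + 1 - k)) 0 = ((rhat π) ^ 0) 0 := by
          rw [← hje, pow_zero, Perm.one_apply]
        exact absurd (pow_inj_per hiP (per_pos _ _) h0) (by omega)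
  · have hrot := mk_mul_rot π j
    have hA : mct (Equiv.Perm.decomposeFin.symm (j, π)) = mct π := mct_mk_ne π hj
    constructor
    · rintro ⟨hg, hk⟩
      have hg' : mct (swap 0 j * rhat π) + mct π = n + 3 := by
        have : mct (Equiv.Perm.decomposeFin.symm (j, π) * finRotate (n + 2)) +
            mct (Equiv.Perm.decomposeFin.symm (j, π)) = n + 3 := hg
        rw [hrot, hA] at this
        exact this
      obtain ⟨c, hc⟩ := sum_bound n π
      have hcρ : mct (rho π) + mct π + 2 * c = n + 2 := hc
      by_cases hsc : (rhat π).SameCycle 0 j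
      · obtain ⟨i, hiP, hji⟩ := mem_cls_iff_pow.1 (mem_cls.2 hsc)
        subst hji
        have hi0 : 0 < i := by
          rcases Nat.eq_zero_or_pos i with rfl | h
          · exfalso; apply hj; rw [pow_zero, Perm.one_apply]
          · exact h
        obtain ⟨hj0, hmct, hper⟩ := split_data π hi0 hiP
        rw [hmct] at hg'
        have hgood : Good π := by
          show mct (rho π) + mct π = n + 2
          omega
        have hkval : k = per (rhat π) 0 - i := by
          rw [← hk]
          show per (Equiv.Perm.decomposeFin.symm (((rhat π) ^ i) 0, π) * finRotate (n + 2))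
            (Fin.last (n + 1)) = _
          rw [hrot, hper]
        refine Or.inr ⟨hgood, by omega, by omega, ?_⟩
        have : CkP π + 1 - k = i := by omega
        rw [this]
      · exfalso
        have h := card_mins_swap_mul_of_not (Ne.symm hj) hsc
        have h2 : mct (swap 0 j * rhat π) + 1 = mct (rhat π) := h
        rw [mct_rhat] at h2
        omega
    · rintro (⟨hj0, _⟩ | ⟨hgπ, hk1, hkle, hje⟩)
      · exact absurd hj0 hj
      · have hi0 : 0 < CkP π + 1 - k := by omega
        have hiP : CkP π + 1 - k < per (rhat π) 0 := by omega
        subst hje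
        obtain ⟨hj0, hmct, hper⟩ := split_data π hi0 hiP
        have hgood : mct (rho π) + mct π = n + 2 := hgπ
        constructor
        · show mct (Equiv.Perm.decomposeFin.symm (_, π) * finRotate (n + 2)) +
            mct (Equiv.Perm.decomposeFin.symm (_, π)) = n + 3
          rw [hrot, hA, hmct]
          omega
        · show per (Equiv.Perm.decomposeFin.symm (_, π) * finRotate (n + 2))
            (Fin.last (n + 1)) = k
          rw [hrot, hper]
          omega

end level2
section counting
open scoped Classical

/-- permutations with good (genus-zero) condition and marked cycle size `k`. -/
noncomputable def TS (m k : ℕ) : Finset (Perm (Fin (m + 1))) :=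
  univ.filter (fun σ => Good σ ∧ CkP σ = k)

noncomputable def GS (m : ℕ) : Finset (Perm (Fin (m + 1))) :=
  univ.filter (fun σ => Good σ)

lemma CkP_le {m : ℕ} (σ : Perm (Fin (m + 1))) : CkP σ ≤ m + 1 := by
  have h := Finset.card_le_univ (cls (σ * finRotate (m + 1)) (Fin.last m))
  rw [Fintype.card_fin] at h
  exact h

lemma good_fin_one (σ : Perm (Fin 1)) : Good σ := by
  show mct (σ * finRotate 1) + mct σ = 2
  rw [mct_fin_one, mct_fin_one]

lemma TS_zero (k : ℕ) : (TS 0 k).card = if k = 1 then 1 else 0 := by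
  by_cases hk : k = 1
  · subst hk
    rw [if_pos rfl]
    have h : TS 0 1 = univ := by
      ext σ
      simp only [TS, Finset.mem_filter, Finset.mem_univ, true_and, iff_true]
      exact ⟨good_fin_one σ, CkP_fin_one σ⟩
    rw [h, Finset.card_univ, Fintype.card_perm, Fintype.card_fin]
    decide
  · rw [if_neg hk, Finset.card_eq_zero, Finset.eq_empty_iff_forall_notMem]
    intro σ hσ
    simp only [TS, Finset.mem_filter] at hσ
    exact hk (by rw [← hσ.2.2, CkP_fin_one])

variable {n : ℕ}

lemma TS_succ_eq (m k : ℕ) (hk : 1 ≤ k) :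
    TS (m + 1) k =
      ((TS m (k - 1)).image (fun π => Equiv.Perm.decomposeFin.symm (0, π))) ∪
        ((univ.filter (fun π : Perm (Fin (m + 1)) => Good π ∧ k ≤ CkP π)).image
          (fun π => Equiv.Perm.decomposeFin.symm ((rhat π ^ (CkP π + 1 - k)) 0, π))) := by
  ext σ
  obtain ⟨⟨j, π⟩, hσ⟩ : ∃ p, Equiv.Perm.decomposeFin.symm p = σ :=
    ⟨Equiv.Perm.decomposeFin σ, Equiv.symm_apply_apply _ _⟩
  subst hσ
  simp only [TS, Finset.mem_filter, Finset.mem_univ, true_and, Finset.mem_union,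
    Finset.mem_image]
  rw [good_ck_char]
  constructor
  · rintro (⟨rfl, hgπ, hck⟩ | ⟨hgπ, hk1, hkle, rfl⟩)
    · exact Or.inl ⟨π, ⟨hgπ, by omega⟩, rfl⟩
    · exact Or.inr ⟨π, ⟨hgπ, hkle⟩, rfl⟩
  · rintro (⟨π', hπ', heq⟩ | ⟨π', hπ', heq⟩)
    · have hpair := Equiv.Perm.decomposeFin.symm.injective heq
      injection hpair with h1 h2
      subst h1; subst h2
      exact Or.inl ⟨rfl, hπ'.1, by omega⟩
    · have hpair := Equiv.Perm.decomposeFin.symm.injective heq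
      injection hpair with h1 h2
      subst h2
      exact Or.inr ⟨hπ'.1, hk, hπ'.2, h1.symm⟩

lemma TS_succ_card (m k : ℕ) (hk : 1 ≤ k) :
    (TS (m + 1) k).card =
      (TS m (k - 1)).card +
        (univ.filter (fun π : Perm (Fin (m + 1)) => Good π ∧ k ≤ CkP π)).card := by
  have hinj1 : Function.Injective
      (fun π : Perm (Fin (m + 1)) => Equiv.Perm.decomposeFin.symm ((0 : Fin (m + 2)), π)) := by
    intro a b hab
    have h := Equiv.Perm.decomposeFin.symm.injective hab
    injection h with h1 h2
  have hinj2 : Function.Injective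
      (fun π : Perm (Fin (m + 1)) =>
        Equiv.Perm.decomposeFin.symm ((rhat π ^ (CkP π + 1 - k)) 0, π)) := by
    intro a b hab
    have h := Equiv.Perm.decomposeFin.symm.injective hab
    injection h with h1 h2
  have hdisj : Disjoint
      ((TS m (k - 1)).image (fun π => Equiv.Perm.decomposeFin.symm ((0 : Fin (m + 2)), π)))
      ((univ.filter (fun π : Perm (Fin (m + 1)) => Good π ∧ k ≤ CkP π)).image
        (fun π => Equiv.Perm.decomposeFin.symm ((rhat π ^ (CkP π + 1 - k)) 0, π))) := by
    rw [Finset.disjoint_left]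
    rintro σ h1 h2
    simp only [Finset.mem_image, Finset.mem_filter, Finset.mem_univ, true_and] at h1 h2
    obtain ⟨π1, _, rfl⟩ := h1
    obtain ⟨π2, ⟨hg2, hk2⟩, heq⟩ := h2
    have hpair := Equiv.Perm.decomposeFin.symm.injective heq
    injection hpair with hj hπ
    -- hj : (rhat π2 ^ (CkP π2 + 1 - k)) 0 = 0, contradiction
    have hperP : per (rhat π2) 0 = CkP π2 + 1 := per_rhat_zero π2
    have hi0 : 0 < CkP π2 + 1 - k := by omega
    have hiP : CkP π2 + 1 - k < per (rhat π2) 0 := by omega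
    exact (split_data π2 hi0 hiP).1 hj
  rw [TS_succ_eq m k hk, Finset.card_union_of_disjoint hdisj,
    Finset.card_image_of_injective _ hinj1, Finset.card_image_of_injective _ hinj2]

lemma Sge_eq (m k : ℕ) :
    (univ.filter (fun π : Perm (Fin (m + 1)) => Good π ∧ k ≤ CkP π)).card =
      ∑ t ∈ Finset.Icc k (m + 1), (TS m t).card := by
  rw [Finset.card_eq_sum_card_fiberwise (f := CkP) (t := Finset.Icc k (m + 1))]
  · refine Finset.sum_congr rfl fun t ht => ?_
    congr 1
    ext π
    simp only [TS, Finset.mem_filter, Finset.mem_univ, true_and, Finset.mem_Icc] at *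
    constructor
    · rintro ⟨⟨hg, _⟩, hck⟩; exact ⟨hg, hck⟩
    · rintro ⟨hg, hck⟩; exact ⟨⟨hg, by omega⟩, hck⟩
  · intro π hπ
    replace hπ := (Finset.mem_filter.1 hπ).2
    exact Finset.mem_Icc.2 ⟨hπ.2, CkP_le π⟩

lemma GS_card_eq (m : ℕ) :
    (GS m).card = ∑ t ∈ Finset.Icc 1 (m + 1), (TS m t).card := by
  rw [← Sge_eq m 1]
  congr 1
  ext π
  simp only [GS, Finset.mem_filter, Finset.mem_univ, true_and]
  exact ⟨fun h => ⟨h, per_pos _ _⟩, fun h => h.1⟩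

end counting
section arith

lemma TS_card_k_zero (m : ℕ) : (TS m 0).card = 0 := by
  rw [Finset.card_eq_zero, Finset.eq_empty_iff_forall_notMem]
  intro σ hσ
  simp only [TS, Finset.mem_filter] at hσ
  have h1 : 0 < CkP σ := per_pos _ _
  omega

lemma hockey0 (x c : ℕ) : ∑ r ∈ Finset.range x, r.choose c = x.choose (c + 1) := by
  induction x with
  | zero => simp
  | succ x ih => rw [Finset.sum_range_succ, ih, Nat.choose_succ_succ (x) c, Nat.add_comm]

lemma hockey (a b c : ℕ) (hab : a ≤ b + 1) :
    (∑ r ∈ Finset.Icc a b, (r.choose c : ℤ)) =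
      ((b + 1).choose (c + 1) : ℤ) - (a.choose (c + 1) : ℤ) := by
  have key : (∑ r ∈ Finset.Icc a b, r.choose c) + a.choose (c + 1) = (b + 1).choose (c + 1) := by
    have h0 := hockey0 (b + 1) c
    have h1 := hockey0 a c
    rw [Finset.range_eq_Ico] at h0 h1
    have hsp : (∑ r ∈ Finset.Ico 0 a, r.choose c) + ∑ r ∈ Finset.Ico a (b + 1), r.choose c
        = ∑ r ∈ Finset.Ico 0 (b + 1), r.choose c :=
      Finset.sum_Ico_consecutive _ (Nat.zero_le a) hab
    rw [← Finset.Ico_add_one_right_eq_Icc]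
    omega
  have hcast := congrArg (fun x : ℕ => (x : ℤ)) key
  push_cast at hcast
  omega

lemma sum_reindex (m k c : ℕ) (hk' : k ≤ m + 1) :
    (∑ t ∈ Finset.Icc k (m + 1), ((2 * m + 1 - t).choose c : ℤ)) =
      ∑ r ∈ Finset.Icc m (2 * m + 1 - k), (r.choose c : ℤ) := by
  apply Finset.sum_nbij' (i := fun t => 2 * m + 1 - t) (j := fun r => 2 * m + 1 - r)
  · intro t ht; simp only [Finset.mem_Icc] at *; omega
  · intro r hr; simp only [Finset.mem_Icc] at *; omega
  · intro t ht; simp only [Finset.mem_Icc] at ht; omega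
  · intro r hr; simp only [Finset.mem_Icc] at hr; omega
  · intro t ht; rfl

lemma TS_closed : ∀ m k, 1 ≤ k → k ≤ m + 1 →
    ((TS m k).card : ℤ) =
      ((2 * m + 1 - k).choose m : ℤ) - ((2 * m + 1 - k).choose (m + 1) : ℤ) := by
  intro m
  induction m with
  | zero =>
    intro k hk1 hk2
    have hke : k = 1 := by omega
    subst hke
    rw [TS_zero, if_pos rfl]
    norm_num
  | succ m ih =>
    intro k hk1 hk2
    have hcast : ((TS (m + 1) k).card : ℤ) =
        ((TS m (k - 1)).card : ℤ) + ∑ t ∈ Finset.Icc k (m + 1), ((TS m t).card : ℤ) := by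
      rw [TS_succ_card m k hk1, Sge_eq m k]
      push_cast
      ring
    have hsum : (∑ t ∈ Finset.Icc k (m + 1), ((TS m t).card : ℤ)) =
        ((2 * m + 2 - k).choose (m + 1) : ℤ) - ((2 * m + 2 - k).choose (m + 2) : ℤ) := by
      rcases le_or_gt k (m + 1) with hkle | hkgt
      · rw [Finset.sum_congr rfl (fun t ht => by
          simp only [Finset.mem_Icc] at ht
          exact ih t (by omega) (by omega))]
        have hb1 : m ≤ (2 * m + 1 - k) + 1 := by omega
        have hock1 := hockey m (2 * m + 1 - k) m hb1
        have hock2 := hockey m (2 * m + 1 - k) (m + 1) hb1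
        rw [Finset.sum_sub_distrib, sum_reindex m k m hkle, sum_reindex m k (m + 1) hkle,
          hock1, hock2]
        rw [show 2 * m + 1 - k + 1 = 2 * m + 2 - k by omega,
          show m + 1 + 1 = m + 2 by omega]
        rw [Nat.choose_eq_zero_of_lt (by omega : m < m + 1),
          Nat.choose_eq_zero_of_lt (by omega : m < m + 2)]
        push_cast
        ring
      · have hke : k = m + 2 := by omega
        subst hke
        rw [Finset.Icc_eq_empty (by omega), Finset.sum_empty,
          show 2 * m + 2 - (m + 2) = m by omega,
          Nat.choose_eq_zero_of_lt (by omega : m < m + 1),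
          Nat.choose_eq_zero_of_lt (by omega : m < m + 2)]
        norm_num
    rcases Nat.eq_or_lt_of_le hk1 with hk | hk
    · -- k = 1
      have hke : k = 1 := hk.symm
      subst hke
      have h0 : ((TS m (1 - 1)).card : ℤ) = 0 := by norm_num [TS_card_k_zero]
      rw [hcast, h0, hsum]
      have p1 : (2 * m + 2).choose (m + 1) = (2 * m + 1).choose m + (2 * m + 1).choose (m + 1) := by
        rw [show 2 * m + 2 = (2 * m + 1) + 1 by omega]
        exact Nat.choose_succ_succ _ _
      have p2 : (2 * m + 2).choose (m + 2) =
          (2 * m + 1).choose (m + 1) + (2 * m + 1).choose (m + 2) := by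
        rw [show 2 * m + 2 = (2 * m + 1) + 1 by omega]
        exact Nat.choose_succ_succ _ _
      have psym : (2 * m + 1).choose (m + 1) = (2 * m + 1).choose m := by
        have h := Nat.choose_symm (by omega : m ≤ 2 * m + 1)
        rw [show 2 * m + 1 - m = m + 1 by omega] at h
        exact h
      rw [show 2 * m + 2 - 1 = 2 * m + 1 by omega,
        show 2 * (m + 1) + 1 - 1 = 2 * m + 2 by omega, show m + 1 + 1 = m + 2 by omega]
      push_cast
      omega
    · -- k ≥ 2
      have hih := ih (k - 1) (by omega) (by omega)
      rw [show 2 * m + 1 - (k - 1) = 2 * m + 2 - k by omega] at hih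
      rw [hcast, hsum, hih]
      have p1 : (2 * m + 3 - k).choose (m + 1) =
          (2 * m + 2 - k).choose m + (2 * m + 2 - k).choose (m + 1) := by
        rw [show 2 * m + 3 - k = (2 * m + 2 - k) + 1 by omega]
        exact Nat.choose_succ_succ _ _
      have p2 : (2 * m + 3 - k).choose (m + 2) =
          (2 * m + 2 - k).choose (m + 1) + (2 * m + 2 - k).choose (m + 2) := by
        rw [show 2 * m + 3 - k = (2 * m + 2 - k) + 1 by omega]
        exact Nat.choose_succ_succ _ _
      rw [show 2 * (m + 1) + 1 - k = 2 * m + 3 - k by omega,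
        show m + 1 + 1 = m + 2 by omega]
      push_cast
      omega

lemma GS_card_closed (m : ℕ) :
    ((GS m).card : ℤ) = ((2 * m + 2).choose (m + 1) : ℤ) - ((2 * m + 2).choose (m + 2) : ℤ) := by
  have h1 : (TS (m + 1) 1).card = (GS m).card := by
    rw [TS_succ_card m 1 (le_refl 1), show (1 : ℕ) - 1 = 0 from rfl, TS_card_k_zero,
      GS_card_eq, Sge_eq m 1]
    omega
  have h2 := TS_closed (m + 1) 1 (le_refl 1) (by omega)
  rw [h1] at h2
  rw [h2, show 2 * (m + 1) + 1 - 1 = 2 * m + 2 by omega]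

lemma GS_card_catalan (m : ℕ) : (GS m).card = catalan (m + 1) := by
  have hmul : (m + 2) * (GS m).card = (m + 2) * catalan (m + 1) := by
    have hcb := succ_mul_catalan_eq_centralBinom (m + 1)
    -- (m+2) * catalan (m+1) = centralBinom (m+1) = (2m+2).choose (m+1)
    have hcb' : (m + 2) * catalan (m + 1) = (2 * m + 2).choose (m + 1) := by
      rw [hcb, Nat.centralBinom]
      congr 1
    rw [hcb']
    -- now show (m+2) * (GS m).card = (2m+2).choose (m+1) via ℤ
    have hG := GS_card_closed m
    have hrel : ((m : ℤ) + 1) * ((2 * m + 2).choose (m + 1) : ℤ) =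
        ((m : ℤ) + 2) * ((2 * m + 2).choose (m + 2) : ℤ) := by
      have h := Nat.choose_succ_right_eq (2 * m + 2) (m + 1)
      rw [show 2 * m + 2 - (m + 1) = m + 1 by omega] at h
      have := congrArg (fun x : ℕ => (x : ℤ)) h
      push_cast at this
      linarith
    have : ((m : ℤ) + 2) * ((GS m).card : ℤ) = ((2 * m + 2).choose (m + 1) : ℤ) := by
      rw [hG]
      ring_nf
      ring_nf at hrel
      linarith
    exact_mod_cast this
  exact Nat.eq_of_mul_eq_mul_left (by omega) hmul

end arith

section final

lemma cycleCount_eq_mct {N : ℕ} (σ : Perm (Fin N)) : cycleCount σ = mct σ :=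
  cycleCount_eq_card_mins σ

def Kc : ℕ → ℕ
  | 0 => 0
  | m + 1 => Kc m * (m + 2) + (m + 1)

lemma prod_range_add_le (x : ℝ) (hx : 1 ≤ x) :
    ∀ m : ℕ, (∏ i ∈ Finset.range (m + 1), (x + (i : ℝ))) ≤ x ^ (m + 1) + (Kc m) * x ^ m := by
  intro m
  induction m with
  | zero => simp [Kc]
  | succ m ih =>
    rw [Finset.prod_range_succ]
    have hx0 : (0 : ℝ) < x := lt_of_lt_of_le one_pos hx
    have hpow : x ^ m ≤ x ^ (m + 1) := by
      calc x ^ m = x ^ m * 1 := by ring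
        _ ≤ x ^ m * x := by
            apply mul_le_mul_of_nonneg_left hx (by positivity)
        _ = x ^ (m + 1) := by ring
    have hK : (0 : ℝ) ≤ (Kc m : ℝ) := Nat.cast_nonneg _
    have hfac : (0 : ℝ) ≤ x + ((m : ℝ) + 1) := by positivity
    have hKc1 : (Kc (m + 1) : ℝ) = (Kc m : ℝ) * ((m : ℝ) + 2) + ((m : ℝ) + 1) := by
      show ((Kc m * (m + 2) + (m + 1) : ℕ) : ℝ) = _
      push_cast
      ring
    have step1 : (∏ i ∈ Finset.range (m + 1), (x + (i : ℝ))) * (x + ((m + 1 : ℕ) : ℝ)) ≤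
        (x ^ (m + 1) + (Kc m) * x ^ m) * (x + ((m : ℝ) + 1)) := by
      push_cast
      apply mul_le_mul_of_nonneg_right _ hfac
      · exact_mod_cast ih
    refine le_trans step1 ?_
    rw [hKc1]
    have key : (Kc m : ℝ) * ((m : ℝ) + 1) * x ^ m ≤ (Kc m : ℝ) * ((m : ℝ) + 1) * x ^ (m + 1) :=
      mul_le_mul_of_nonneg_left hpow (by positivity)
    have hxe1 : x ^ (m + 1) * x = x ^ (m + 1 + 1) := (pow_succ x (m + 1)).symm
    have hxe2 : x ^ m * x = x ^ (m + 1) := (pow_succ x m).symm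
    nlinarith [key, hxe1, hxe2]

lemma ascFactorial_prod (n : ℕ) : ∀ k, n.ascFactorial k = ∏ i ∈ Finset.range k, (n + i)
  | 0 => by simp
  | k + 1 => by
    rw [Nat.ascFactorial_succ, Finset.prod_range_succ, ascFactorial_prod n k, Nat.mul_comm]

lemma P_eq (d a : ℕ) :
    a.factorial * (d ^ 2 + a - 1).choose a = ∏ i ∈ Finset.range a, (d ^ 2 + i) := by
  rw [← ascFactorial_prod]
  exact (Nat.ascFactorial_eq_factorial_mul_choose' _ _).symm

theorem asymptotic_purity_catalan' (α : ℕ) (hα : 1 ≤ α) :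
    ∃ C : ℝ, ∀ d : ℕ, 1 ≤ d →
      |(1 / ((α.factorial : ℝ) * (Nat.choose (d ^ 2 + α - 1) α : ℝ))) *
          ∑ σ : Equiv.Perm (Fin α), (d : ℝ) ^ (cycleCount (σ * finRotate α) + cycleCount σ)
        - (catalan α : ℝ) * (d : ℝ) ^ ((1 : ℤ) - α)|
        ≤ C * (d : ℝ) ^ (-((α : ℤ) + 1)) := by
  classical
  obtain ⟨m, rfl⟩ : ∃ m, α = m + 1 := ⟨α - 1, by omega⟩
  set F : ℝ := ((m + 1).factorial : ℝ) with hFdef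
  set cat : ℝ := (catalan (m + 1) : ℝ) with hcatdef
  set K' : ℝ := (Kc m : ℝ) with hKdef
  have hF0 : 0 ≤ F := Nat.cast_nonneg _
  have hcat0 : 0 ≤ cat := Nat.cast_nonneg _
  have hK0 : 0 ≤ K' := Nat.cast_nonneg _
  refine ⟨F + cat * K', ?_⟩
  intro d hd
  set x : ℝ := (d : ℝ) with hxdef
  have hx1 : (1 : ℝ) ≤ x := by rw [hxdef]; exact_mod_cast hd
  have hx0 : (0 : ℝ) < x := lt_of_lt_of_le one_pos hx1
  set C : ℝ := F + cat * K' with hCdef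
  have hC0 : 0 ≤ C := by positivity
  -- the denominator
  set P : ℝ := (((m + 1).factorial : ℝ) * ((d ^ 2 + (m + 1) - 1).choose (m + 1) : ℝ)) with hPdef
  have hPprod : P = ∏ i ∈ Finset.range (m + 1), (x ^ 2 + (i : ℝ)) := by
    rw [hPdef, ← Nat.cast_mul, P_eq d (m + 1), Nat.cast_prod]
    apply Finset.prod_congr rfl
    intro i _
    push_cast
    ring
  have hy1 : (1 : ℝ) ≤ x ^ 2 := by nlinarith
  have hPlow : x ^ (2 * m + 2) ≤ P := by
    rw [hPprod]
    have h1 : x ^ (2 * m + 2) = ∏ _i ∈ Finset.range (m + 1), (x ^ 2) := by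
      rw [Finset.prod_const, Finset.card_range, ← pow_mul]
      congr 1 <;> omega
    rw [h1]
    apply Finset.prod_le_prod
    · intro i _; positivity
    · intro i _
      have : (0 : ℝ) ≤ (i : ℝ) := Nat.cast_nonneg _
      linarith
  have hPhigh : P ≤ x ^ (2 * m + 2) + K' * x ^ (2 * m) := by
    rw [hPprod]
    have h := prod_range_add_le (x ^ 2) hy1 m
    rw [← pow_mul, ← pow_mul] at h
    rw [show 2 * (m + 1) = 2 * m + 2 by omega] at h
    exact h
  have hP0 : 0 < P := lt_of_lt_of_le (by positivity) hPlow
  clear_value P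
  -- the sum
  set S : ℝ := ∑ σ : Perm (Fin (m + 1)),
    x ^ (cycleCount (σ * finRotate (m + 1)) + cycleCount σ) with hSdef
  have hSsplit : S = (∑ σ ∈ GS m, x ^ (cycleCount (σ * finRotate (m + 1)) + cycleCount σ)) +
      ∑ σ ∈ (GS m)ᶜ, x ^ (cycleCount (σ * finRotate (m + 1)) + cycleCount σ) :=
    (Finset.sum_add_sum_compl (GS m) _).symm
  have hgoodsum : (∑ σ ∈ GS m, x ^ (cycleCount (σ * finRotate (m + 1)) + cycleCount σ)) =
      cat * x ^ (m + 2) := by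
    rw [Finset.sum_congr rfl (fun σ hσ => ?_), Finset.sum_const, nsmul_eq_mul,
      GS_card_catalan m, hcatdef]
    have hg : Good σ := by
      simp only [GS, Finset.mem_filter] at hσ
      exact hσ.2
    rw [cycleCount_eq_mct, cycleCount_eq_mct, hg]
  have hbad_nonneg : 0 ≤ ∑ σ ∈ (GS m)ᶜ,
      x ^ (cycleCount (σ * finRotate (m + 1)) + cycleCount σ) := by
    apply Finset.sum_nonneg
    intro σ _
    positivity
  have hbad_le : (∑ σ ∈ (GS m)ᶜ, x ^ (cycleCount (σ * finRotate (m + 1)) + cycleCount σ)) ≤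
      F * x ^ m := by
    have hterm : ∀ σ ∈ (GS m)ᶜ,
        x ^ (cycleCount (σ * finRotate (m + 1)) + cycleCount σ) ≤ x ^ m := by
      intro σ hσ
      have hng : ¬Good σ := by
        simp only [Finset.mem_compl, GS, Finset.mem_filter, Finset.mem_univ, true_and] at hσ
        exact hσ
      obtain ⟨c, hc⟩ := sum_bound m σ
      have he : cycleCount (σ * finRotate (m + 1)) + cycleCount σ =
          mct (σ * finRotate (m + 1)) + mct σ := by
        rw [cycleCount_eq_mct, cycleCount_eq_mct]
      have hcpos : 1 ≤ c := by
        rcases Nat.eq_zero_or_pos c with rfl | h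
        · exfalso; exact hng (by show mct _ + mct σ = m + 2; omega)
        · exact h
      rw [he]
      apply pow_le_pow_right₀ hx1
      omega
    calc (∑ σ ∈ (GS m)ᶜ, x ^ (cycleCount (σ * finRotate (m + 1)) + cycleCount σ)) ≤
        ∑ _σ ∈ (GS m)ᶜ, x ^ m := Finset.sum_le_sum hterm
      _ = ((GS m)ᶜ.card : ℝ) * x ^ m := by rw [Finset.sum_const, nsmul_eq_mul]
      _ ≤ F * x ^ m := by
          apply mul_le_mul_of_nonneg_right _ (by positivity)
          rw [hFdef]
          have h1 : ((GS m)ᶜ).card ≤ Fintype.card (Perm (Fin (m + 1))) := Finset.card_le_univ _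
          rw [Fintype.card_perm, Fintype.card_fin] at h1
          exact_mod_cast h1
  have hSup : S ≤ cat * x ^ (m + 2) + F * x ^ m := by
    rw [hSsplit, hgoodsum]
    linarith
  have hSlow : cat * x ^ (m + 2) ≤ S := by
    rw [hSsplit, hgoodsum]
    linarith
  -- zpow conversions
  have hz1 : x ^ ((1 : ℤ) - ((m : ℤ) + 1)) = (x ^ m)⁻¹ := by
    rw [show (1 : ℤ) - ((m : ℤ) + 1) = -(m : ℤ) by ring, zpow_neg, zpow_natCast]
  have hz2 : x ^ (-(((m : ℤ) + 1) + 1)) = (x ^ (m + 2))⁻¹ := by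
    rw [show -(((m : ℤ) + 1) + 1) = -(((m + 2 : ℕ) : ℤ)) by push_cast; ring, zpow_neg,
      zpow_natCast]
  have hgoal1 : ((1 : ℤ) - ((m + 1 : ℕ) : ℤ)) = ((1 : ℤ) - ((m : ℤ) + 1)) := by push_cast; ring
  have hgoal2 : (-(((m + 1 : ℕ) : ℤ) + 1)) = (-(((m : ℤ) + 1) + 1)) := by push_cast; ring
  rw [hgoal1, hgoal2, hz1, hz2]
  -- power identities
  have hpow1 : x ^ (m + 2) * x ^ m = x ^ (2 * m + 2) := by
    rw [← pow_add]; congr 1; omega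
  have hpow2 : x ^ m * x ^ m = x ^ (2 * m) := by
    rw [← pow_add]; congr 1; omega
  have hxm0 : (0 : ℝ) < x ^ m := by positivity
  have hxm20 : (0 : ℝ) < x ^ (m + 2) := by positivity
  -- core bound
  clear_value S
  have hFC : F * x ^ (2 * m) ≤ C * x ^ (2 * m) := by
    apply mul_le_mul_of_nonneg_right _ (by positivity)
    rw [hCdef]
    nlinarith [mul_nonneg hcat0 hK0]
  have hKC : cat * K' * x ^ (2 * m) ≤ C * x ^ (2 * m) := by
    apply mul_le_mul_of_nonneg_right _ (by positivity)
    rw [hCdef]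
    linarith
  have hD : |S * x ^ m - cat * P| ≤ C * x ^ (2 * m) := by
    rw [abs_le]
    constructor
    · -- lower: -(C x^2m) ≤ S x^m - cat P
      have l1 : cat * P ≤ cat * (x ^ (2 * m + 2) + K' * x ^ (2 * m)) :=
        mul_le_mul_of_nonneg_left hPhigh hcat0
      have l2 : cat * (x ^ (2 * m + 2) + K' * x ^ (2 * m)) =
          cat * x ^ (m + 2) * x ^ m + cat * K' * x ^ (2 * m) := by
        rw [← hpow1]; ring
      have l3 : cat * x ^ (m + 2) * x ^ m ≤ S * x ^ m :=
        mul_le_mul_of_nonneg_right hSlow hxm0.le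
      linarith
    · -- upper
      have u1 : S * x ^ m ≤ (cat * x ^ (m + 2) + F * x ^ m) * x ^ m :=
        mul_le_mul_of_nonneg_right hSup hxm0.le
      have u2 : (cat * x ^ (m + 2) + F * x ^ m) * x ^ m =
          cat * x ^ (2 * m + 2) + F * x ^ (2 * m) := by
        rw [← hpow1, ← hpow2]; ring
      have u3 : cat * x ^ (2 * m + 2) ≤ cat * P := mul_le_mul_of_nonneg_left hPlow hcat0
      linarith
  have hsub : 1 / P * S - cat * (x ^ m)⁻¹ = (S * x ^ m - cat * P) / (P * x ^ m) := by
    field_simp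
  rw [hsub, abs_div, abs_of_pos (by positivity : (0 : ℝ) < P * x ^ m),
    div_le_iff₀ (by positivity : (0 : ℝ) < P * x ^ m)]
  have hrhs : C * (x ^ (m + 2))⁻¹ * (P * x ^ m) = C * P * x ^ m / x ^ (m + 2) := by
    ring
  rw [hrhs, le_div_iff₀ hxm20]
  have hpow3 : x ^ (2 * m) * x ^ (m + 2) = x ^ (2 * m + 2) * x ^ m := by
    rw [← pow_add, ← pow_add]; congr 1; omega
  calc |S * x ^ m - cat * P| * x ^ (m + 2) ≤ (C * x ^ (2 * m)) * x ^ (m + 2) := by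
        apply mul_le_mul_of_nonneg_right hD hxm20.le
    _ = C * (x ^ (2 * m + 2) * x ^ m) := by rw [mul_assoc, hpow3]
    _ ≤ C * (P * x ^ m) := by
        apply mul_le_mul_of_nonneg_left _ hC0
        exact mul_le_mul_of_nonneg_right hPlow hxm0.le
    _ = C * P * x ^ m := by ring

end final


theorem asymptotic_purity_catalan (α : ℕ) (hα : 1 ≤ α) :
    ∃ C : ℝ, ∀ d : ℕ, 1 ≤ d →
      |(1 / ((α.factorial : ℝ) * (Nat.choose (d ^ 2 + α - 1) α : ℝ))) *
          ∑ σ : Equiv.Perm (Fin α), (d : ℝ) ^ (cycleCount (σ * finRotate α) + cycleCount σ)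
        - (catalan α : ℝ) * (d : ℝ) ^ ((1 : ℤ) - α)|
        ≤ C * (d : ℝ) ^ (-((α : ℤ) + 1)) := by
  exact asymptotic_purity_catalan' α hα
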